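/- arXiv:1907.13254 — 3 statements merged into one kernel-verified Lean document; each statement's English description precedes it below -/
import Mathlib

section
/- For n = 2, let τ be the ℂ-algebra automorphism of L with τ(x_{11}) = x_{11}, τ(x_{21}) = x_{22} and τ(x_{22}) = x_{21}. Then the fixed subalgebra of 𝒜(gl_2) under conjugation by τ equals U_2: {u ∈ 𝒜(gl_2) : τ ∘ u ∘ τ^{-1} = u} = U_2. -/
open scoped BigOperators
open MvPolynomial


noncomputable section

/-- The polynomial ring `Λ = ℂ[x_{ki}]` (variables indexed by pairs `(k, i)`). -/
abbrev Lam : Type := MvPolynomial (ℕ × ℕ) ℂ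

/-- `L`, the field of fractions of `Λ`. -/
abbrev L : Type := FractionRing Lam

/-- The variable `x_{ki}` as an element of `L`. -/
def x (k i : ℕ) : L := algebraMap Lam L (X (k, i))

/-- The algebra automorphism of `Λ` sending `x_v ↦ x_v - 1` and fixing the other variables. -/
def shiftEquiv (v : ℕ × ℕ) : Lam ≃ₐ[ℂ] Lam :=
  AlgEquiv.ofAlgHom
    (aeval (fun w => if w = v then X w - 1 else X w))
    (aeval (fun w => if w = v then X w + 1 else X w))
    (by apply MvPolynomial.algHom_ext; intro w; by_cases h : w = v <;> simp [h])
    (by apply MvPolynomial.algHom_ext; intro w; by_cases h : w = v <;> simp [h])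

/-- The automorphism `δ^{ki}` of `L`, determined by `δ^{ki}(x_{ℓj}) = x_{ℓj} - δ_{ℓk}δ_{ij}`. -/
def δ (k i : ℕ) : L ≃ₐ[ℂ] L := IsFractionRing.algEquivOfAlgEquiv (shiftEquiv (k, i))

/-- Multiplication by `a ∈ L` as a `ℂ`-linear endomorphism `m_a` of `L`. -/
def mulOp (a : L) : Module.End ℂ L := LinearMap.mulLeft ℂ a

/-- A field automorphism of `L` as a `ℂ`-linear endomorphism of `L`. -/
def lin (e : L ≃ₐ[ℂ] L) : Module.End ℂ L := e.toLinearMap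

/-- The rational function `a_{ki}^+`. -/
def aP (k i : ℕ) : L :=
  -((∏ j ∈ Finset.Icc 1 (k + 1), (x (k + 1) j - x k i)) /
    ∏ j ∈ (Finset.Icc 1 k).erase i, (x k j - x k i))

/-- The rational function `a_{ki}^-`. -/
def aM (k i : ℕ) : L :=
  (∏ j ∈ Finset.Icc 1 (k - 1), (x (k - 1) j - x k i)) /
    ∏ j ∈ (Finset.Icc 1 k).erase i, (x k j - x k i)

/-- The operator `A_{ki}^+ = δ^{ki} ∘ m_{a_{ki}^+}`. -/
def Ap (k i : ℕ) : Module.End ℂ L := lin (δ k i) * mulOp (aP k i)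

/-- The operator `A_{ki}^- = (δ^{ki})^{-1} ∘ m_{a_{ki}^-}`. -/
def Am (k i : ℕ) : Module.End ℂ L := lin (δ k i).symm * mulOp (aM k i)

/-- The operator `X_k^+ = ∑_{i=1}^k A_{ki}^+`. -/
def Xp (k : ℕ) : Module.End ℂ L := ∑ i ∈ Finset.Icc 1 k, Ap k i

/-- The operator `X_k^- = ∑_{i=1}^k A_{ki}^-`. -/
def Xm (k : ℕ) : Module.End ℂ L := ∑ i ∈ Finset.Icc 1 k, Am k i

/-- The operator `X_{kk}`. -/
def Xd (k : ℕ) : Module.End ℂ L :=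
  mulOp ((∑ j ∈ Finset.Icc 1 k, (x k j + (j : L) - 1)) -
    ∑ i ∈ Finset.Icc 1 (k - 1), (x (k - 1) i + (i : L) - 1))

/-- The Vandermonde polynomial `∏_{1 ≤ i < j ≤ k} (x_{ki} - x_{kj})`, as an element of `L`. -/
def vand (k : ℕ) : L :=
  ∏ p ∈ (Finset.Icc 1 k ×ˢ Finset.Icc 1 k).filter (fun p => p.1 < p.2),
    (x k p.1 - x k p.2)

/-- The operator `𝒱_k = m_{∏_{i<j}(x_{ki} - x_{kj})}`. -/
def Vop (k : ℕ) : Module.End ℂ L := mulOp (vand k)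

/-- The generating set of `U_n`: the `X_k^±` for `1 ≤ k ≤ n-1` and the `X_{kk}` for `1 ≤ k ≤ n`. -/
def Ugens (n : ℕ) : Set (Module.End ℂ L) :=
  {u | ∃ k, 1 ≤ k ∧ k + 1 ≤ n ∧ (u = Xp k ∨ u = Xm k)} ∪
    {u | ∃ k, 1 ≤ k ∧ k ≤ n ∧ u = Xd k}

/-- `U_n`, the Gelfand–Tsetlin realization of `U(gl_n)` inside `End_ℂ(L)`. -/
def Ualg (n : ℕ) : Subalgebra ℂ (Module.End ℂ L) := Algebra.adjoin ℂ (Ugens n)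

/-- `𝒜(gl_n)`, the subalgebra generated by `U_n` together with `𝒱_2, …, 𝒱_n`. -/
def Agl (n : ℕ) : Subalgebra ℂ (Module.End ℂ L) :=
  Algebra.adjoin ℂ (Ugens n ∪ {u | ∃ k, 2 ≤ k ∧ k ≤ n ∧ u = Vop k})

/-- The ℂ-algebra automorphism `τ` of `L` with `τ(x_{11}) = x_{11}`, `τ(x_{21}) = x_{22}`,
`τ(x_{22}) = x_{21}`. -/
def τ2 : L ≃ₐ[ℂ] L :=
  IsFractionRing.algEquivOfAlgEquiv
    (MvPolynomial.renameEquiv ℂ (Equiv.swap ((2, 1) : ℕ × ℕ) (2, 2)))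

set_option synthInstance.maxHeartbeats 1000000
set_option maxSynthPendingDepth 5
set_option maxHeartbeats 2000000

-- basic action lemmas
lemma delta_x (k i l j : ℕ) :
    δ k i (x l j) = if (l, j) = (k, i) then x l j - 1 else x l j := by
  unfold δ x
  rw [IsFractionRing.algEquivOfAlgEquiv_algebraMap]
  show algebraMap Lam L (aeval (fun w => if w = (k,i) then X w - 1 else X w) (X (l,j))) = _
  rw [aeval_X]
  by_cases h : (l, j) = (k, i) <;> simp [h]

lemma tau_x (l j : ℕ) :
    τ2 (x l j) = algebraMap Lam L (X (Equiv.swap ((2,1) : ℕ × ℕ) (2,2) (l, j))) := by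
  unfold τ2 x
  rw [IsFractionRing.algEquivOfAlgEquiv_algebraMap]
  simp

lemma tau_x11 : τ2 (x 1 1) = x 1 1 := by
  rw [tau_x]; rw [Equiv.swap_apply_of_ne_of_ne (by decide) (by decide)]; rfl

lemma tau_x21 : τ2 (x 2 1) = x 2 2 := by
  rw [tau_x]; rw [Equiv.swap_apply_left]; rfl

lemma tau_x22 : τ2 (x 2 2) = x 2 1 := by
  rw [tau_x]; rw [Equiv.swap_apply_right]; rfl


lemma mulOp_apply (a f : L) : mulOp a f = a * f := rfl
lemma lin_apply (e : L ≃ₐ[ℂ] L) (f : L) : lin e f = e f := rfl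

lemma mulOp_mul (a b : L) : mulOp (a * b) = mulOp a * mulOp b := by
  ext f; simp [mulOp_apply, Module.End.mul_apply, mul_assoc]

lemma mulOp_add (a b : L) : mulOp (a + b) = mulOp a + mulOp b := by
  ext f; simp [mulOp_apply, add_mul]

lemma mulOp_one : mulOp 1 = 1 := by
  ext f; simp [mulOp_apply]

-- pair versions
lemma delta_xp (k i : ℕ) (p : ℕ × ℕ) :
    δ k i (algebraMap Lam L (X p)) =
      if p = (k, i) then algebraMap Lam L (X p) - 1 else algebraMap Lam L (X p) := by
  obtain ⟨l, j⟩ := p; exact delta_x k i l j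

lemma tau_xp (p : ℕ × ℕ) :
    τ2 (algebraMap Lam L (X p)) =
      algebraMap Lam L (X (Equiv.swap ((2,1) : ℕ × ℕ) (2,2) p)) := by
  obtain ⟨l, j⟩ := p; exact tau_x l j

lemma swap_eq_one_iff (p : ℕ × ℕ) :
    Equiv.swap ((2,1) : ℕ × ℕ) (2,2) p = (1, 1) ↔ p = (1, 1) := by
  constructor
  · intro h
    have := congrArg (Equiv.swap ((2,1) : ℕ × ℕ) (2,2)) h
    rwa [Equiv.swap_apply_self, Equiv.swap_apply_of_ne_of_ne (by decide) (by decide)] at this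
  · intro h; rw [h, Equiv.swap_apply_of_ne_of_ne (by decide) (by decide)]

-- commutation of τ2 with δ 1 1
lemma tau_delta_comm (f : L) : τ2 (δ 1 1 f) = δ 1 1 (τ2 f) := by
  have h : (τ2.toRingEquiv.toRingHom.comp (δ 1 1).toRingEquiv.toRingHom)
      = ((δ 1 1).toRingEquiv.toRingHom.comp τ2.toRingEquiv.toRingHom) := by
    apply IsLocalization.ringHom_ext (nonZeroDivisors Lam)
    apply MvPolynomial.ringHom_ext
    · intro r
      have hC : (algebraMap Lam L) (C r) = algebraMap ℂ L r := by
        simp [IsScalarTower.algebraMap_apply ℂ Lam L]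
      show τ2 (δ 1 1 ((algebraMap Lam L) (C r))) = δ 1 1 (τ2 ((algebraMap Lam L) (C r)))
      rw [hC]; simp only [AlgEquiv.commutes]
    · intro p
      show τ2 (δ 1 1 (algebraMap Lam L (X p))) = δ 1 1 (τ2 (algebraMap Lam L (X p)))
      rw [delta_xp, tau_xp]
      by_cases h : p = ((1 : ℕ), (1 : ℕ))
      · rw [if_pos h, map_sub, map_one, tau_xp, delta_xp,
          if_pos ((swap_eq_one_iff p).mpr h)]
      · rw [if_neg h, tau_xp, delta_xp, if_neg (fun hc => h ((swap_eq_one_iff p).mp hc))]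
  exact RingHom.congr_fun h f

-- concrete computations
lemma Icc11 : Finset.Icc 1 1 = ({1} : Finset ℕ) := rfl
lemma Icc12 : Finset.Icc 1 2 = ({1, 2} : Finset ℕ) := rfl
lemma Icc10 : Finset.Icc 1 0 = (∅ : Finset ℕ) := rfl

lemma aP11 : aP 1 1 = -((x 2 1 - x 1 1) * (x 2 2 - x 1 1)) := by
  unfold aP
  rw [Icc12, Icc11]
  simp

lemma aM11 : aM 1 1 = 1 := by
  unfold aM
  rw [Icc10, Icc11]
  simp

lemma Xp1 : Xp 1 = lin (δ 1 1) * mulOp (aP 1 1) := by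
  unfold Xp; rw [Icc11, Finset.sum_singleton]; rfl

lemma Xm1 : Xm 1 = lin (δ 1 1).symm := by
  unfold Xm; rw [Icc11, Finset.sum_singleton]
  unfold Am; rw [aM11, mulOp_one, mul_one]

lemma Xd1 : Xd 1 = mulOp (x 1 1) := by
  unfold Xd
  rw [show (1 : ℕ) - 1 = 0 from rfl, Icc10, Icc11]
  simp

lemma Xd2 : Xd 2 = mulOp (x 2 1 + x 2 2 + 1 - x 1 1) := by
  unfold Xd
  rw [show (2 : ℕ) - 1 = 1 from rfl, Icc12, Icc11]
  rw [Finset.sum_insert (by decide), Finset.sum_singleton, Finset.sum_singleton]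
  norm_num
  congr 1
  ring

lemma filter12 : ((Finset.Icc 1 2 ×ˢ Finset.Icc 1 2).filter (fun p => p.1 < p.2)) =
    ({(1, 2)} : Finset (ℕ × ℕ)) := by decide

lemma vand2 : vand 2 = x 2 1 - x 2 2 := by
  unfold vand; rw [filter12, Finset.prod_singleton]

-- conjugation by τ2 as an algebra homomorphism
lemma lin_tau_mul_symm : lin τ2 * lin τ2.symm = 1 := by
  ext f; simp [lin, Module.End.mul_apply]

lemma lin_tau_symm_mul : lin τ2.symm * lin τ2 = 1 := by
  ext f; simp [lin, Module.End.mul_apply]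

def conjA : Module.End ℂ L →ₐ[ℂ] Module.End ℂ L where
  toFun u := lin τ2 * u * lin τ2.symm
  map_one' := by show lin τ2 * 1 * lin τ2.symm = 1; rw [mul_one, lin_tau_mul_symm]
  map_mul' u v := by
    calc lin τ2 * (u * v) * lin τ2.symm
        = lin τ2 * u * ((lin τ2.symm * lin τ2) * (v * lin τ2.symm)) := by
          rw [lin_tau_symm_mul, one_mul, ← mul_assoc, ← mul_assoc]
      _ = lin τ2 * u * lin τ2.symm * (lin τ2 * v * lin τ2.symm) := by
          noncomm_ring
  map_zero' := by simp
  map_add' u v := by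
    show lin τ2 * (u + v) * lin τ2.symm = _
    rw [mul_add, add_mul]
  commutes' r := by
    show lin τ2 * algebraMap ℂ (Module.End ℂ L) r * lin τ2.symm = _
    rw [Algebra.algebraMap_eq_smul_one, mul_smul_comm, mul_one, smul_mul_assoc,
      lin_tau_mul_symm]

lemma conjA_apply (u : Module.End ℂ L) : conjA u = lin τ2 * u * lin τ2.symm := rfl

lemma conj_mulOp (a : L) : conjA (mulOp a) = mulOp (τ2 a) := by
  ext f
  simp [conjA_apply, lin, mulOp, Module.End.mul_apply, map_mul]

lemma conj_lin_delta : conjA (lin (δ 1 1)) = lin (δ 1 1) := by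
  ext f
  simp only [conjA_apply, lin, Module.End.mul_apply, AlgEquiv.toLinearMap_apply]
  rw [tau_delta_comm, AlgEquiv.apply_symm_apply]

lemma tau_delta_symm_comm (f : L) : τ2 ((δ 1 1).symm f) = (δ 1 1).symm (τ2 f) := by
  apply (δ 1 1).injective
  rw [← tau_delta_comm, AlgEquiv.apply_symm_apply, AlgEquiv.apply_symm_apply]

lemma conj_lin_delta_symm : conjA (lin (δ 1 1).symm) = lin (δ 1 1).symm := by
  ext f
  simp only [conjA_apply, lin, Module.End.mul_apply, AlgEquiv.toLinearMap_apply]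
  rw [tau_delta_symm_comm, AlgEquiv.apply_symm_apply]

lemma tau_aP11 : τ2 (aP 1 1) = aP 1 1 := by
  rw [aP11, map_neg, map_mul, map_sub, map_sub, tau_x11, tau_x21, tau_x22]
  ring

lemma conj_Xp1 : conjA (Xp 1) = Xp 1 := by
  rw [Xp1, map_mul, conj_lin_delta, conj_mulOp, tau_aP11]

lemma conj_Xm1 : conjA (Xm 1) = Xm 1 := by
  rw [Xm1, conj_lin_delta_symm]

lemma conj_Xd1 : conjA (Xd 1) = Xd 1 := by
  rw [Xd1, conj_mulOp, tau_x11]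

lemma conj_Xd2 : conjA (Xd 2) = Xd 2 := by
  rw [Xd2, conj_mulOp]
  rw [map_sub, map_add, map_add, map_one, tau_x11, tau_x21, tau_x22]
  congr 1
  ring

lemma tau_vand2 : τ2 (vand 2) = -(vand 2) := by
  rw [vand2, map_sub, tau_x21, tau_x22]
  ring

lemma conj_Vop2 : conjA (Vop 2) = -(Vop 2) := by
  show conjA (mulOp (vand 2)) = _
  rw [conj_mulOp, tau_vand2]
  ext f
  exact neg_mul _ _

-- generators of Ugens 2
lemma Ugens2_cases {u : Module.End ℂ L} (hu : u ∈ Ugens 2) :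
    u = Xp 1 ∨ u = Xm 1 ∨ u = Xd 1 ∨ u = Xd 2 := by
  rcases hu with ⟨k, hk1, hk2, h | h⟩ | ⟨k, hk1, hk2, h⟩
  · have : k = 1 := by omega
    subst this; exact Or.inl h
  · have : k = 1 := by omega
    subst this; exact Or.inr (Or.inl h)
  · interval_cases k
    · exact Or.inr (Or.inr (Or.inl h))
    · exact Or.inr (Or.inr (Or.inr h))

lemma conj_fix_U {u : Module.End ℂ L} (hu : u ∈ Ualg 2) : conjA u = u := by
  induction hu using Algebra.adjoin_induction with
  | mem v hv =>
    rcases Ugens2_cases hv with h | h | h | h <;> subst h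
    · exact conj_Xp1
    · exact conj_Xm1
    · exact conj_Xd1
    · exact conj_Xd2
  | algebraMap r => exact conjA.commutes r
  | add v w _ _ hv hw => rw [map_add, hv, hw]
  | mul v w _ _ hv hw => rw [map_mul, hv, hw]

-- Vop 2 commutes with U_2
lemma mulOp_comm (a b : L) : mulOp a * mulOp b = mulOp b * mulOp a := by
  rw [← mulOp_mul, ← mulOp_mul, mul_comm]

lemma delta_vand2 : δ 1 1 (vand 2) = vand 2 := by
  rw [vand2, map_sub, delta_x, delta_x, if_neg (by decide), if_neg (by decide)]

lemma delta_symm_vand2 : (δ 1 1).symm (vand 2) = vand 2 := by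
  apply (δ 1 1).injective
  rw [AlgEquiv.apply_symm_apply, delta_vand2]

lemma Vop_lin_delta : Vop 2 * lin (δ 1 1) = lin (δ 1 1) * Vop 2 := by
  ext f
  show vand 2 * (δ 1 1) f = (δ 1 1) (vand 2 * f)
  rw [map_mul, delta_vand2]

lemma Vop_lin_delta_symm : Vop 2 * lin (δ 1 1).symm = lin (δ 1 1).symm * Vop 2 := by
  ext f
  show vand 2 * (δ 1 1).symm f = (δ 1 1).symm (vand 2 * f)
  rw [map_mul, delta_symm_vand2]

lemma Vcomm {u : Module.End ℂ L} (hu : u ∈ Ualg 2) : Vop 2 * u = u * Vop 2 := by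
  induction hu using Algebra.adjoin_induction with
  | mem v hv =>
    rcases Ugens2_cases hv with h | h | h | h <;> subst h
    · rw [Xp1, ← mul_assoc, Vop_lin_delta, mul_assoc, mul_assoc]
      congr 1
      exact mulOp_comm _ _
    · rw [Xm1, Vop_lin_delta_symm]
    · rw [Xd1]; exact mulOp_comm _ _
    · rw [Xd2]; exact mulOp_comm _ _
  | algebraMap r => exact (Algebra.commutes r (Vop 2)).symm
  | add v w _ _ hv hw => rw [mul_add, add_mul, hv, hw]
  | mul v w _ _ hv hw => rw [← mul_assoc, hv, mul_assoc, hw, mul_assoc]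

-- Vop 2 squared lies in U_2
lemma mulOp_sub (a b : L) : mulOp (a - b) = mulOp a - mulOp b := by
  ext f; simp [mulOp, sub_mul]

lemma mulOp_nsmul (n : ℕ) (a : L) : mulOp (n • a) = n • mulOp a := by
  ext f; simp [mulOp, smul_mul_assoc]

lemma lin_delta_symm_mul : lin (δ 1 1).symm * lin (δ 1 1) = 1 := by
  ext f; simp [lin, Module.End.mul_apply]

lemma XmXp : Xm 1 * Xp 1 = mulOp (aP 1 1) := by
  rw [Xm1, Xp1, ← mul_assoc, lin_delta_symm_mul, one_mul]

lemma sum_mulOp : Xd 2 + Xd 1 - 1 = mulOp (x 2 1 + x 2 2) := by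
  rw [Xd1, Xd2, ← mulOp_add, ← mulOp_one, ← mulOp_sub]
  congr 1
  ring

lemma Vsq_eq : Vop 2 * Vop 2 =
    (Xd 2 + Xd 1 - 1) * (Xd 2 + Xd 1 - 1) + (4 : ℕ) • (Xm 1 * Xp 1)
      - (4 : ℕ) • (Xd 1 * (Xd 2 + Xd 1 - 1)) + (4 : ℕ) • (Xd 1 * Xd 1) := by
  rw [sum_mulOp, XmXp, Xd1]
  show mulOp (vand 2) * mulOp (vand 2) = _
  rw [← mulOp_mul, ← mulOp_mul, ← mulOp_mul, ← mulOp_mul, ← mulOp_nsmul, ← mulOp_nsmul,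
    ← mulOp_nsmul, ← mulOp_add, ← mulOp_sub, ← mulOp_add]
  congr 1
  rw [vand2, aP11]
  simp only [nsmul_eq_mul]
  ring

lemma Vsq_mem : Vop 2 * Vop 2 ∈ Ualg 2 := by
  rw [Vsq_eq]
  have g1 : Xd 1 ∈ Ugens 2 := Or.inr ⟨1, le_refl 1, one_le_two, rfl⟩
  have g2 : Xd 2 ∈ Ugens 2 := Or.inr ⟨2, one_le_two, le_refl 2, rfl⟩
  have g3 : Xp 1 ∈ Ugens 2 := Or.inl ⟨1, le_refl 1, le_refl 2, Or.inl rfl⟩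
  have g4 : Xm 1 ∈ Ugens 2 := Or.inl ⟨1, le_refl 1, le_refl 2, Or.inr rfl⟩
  have h1 : Xd 1 ∈ Ualg 2 := Algebra.subset_adjoin g1
  have h2 : Xd 2 ∈ Ualg 2 := Algebra.subset_adjoin g2
  have h3 : Xp 1 ∈ Ualg 2 := Algebra.subset_adjoin g3
  have h4 : Xm 1 ∈ Ualg 2 := Algebra.subset_adjoin g4
  have hs : Xd 2 + Xd 1 - 1 ∈ Ualg 2 :=
    (Ualg 2).sub_mem (add_mem h2 h1) (one_mem _)
  exact add_mem ((Ualg 2).sub_mem (add_mem (mul_mem hs hs) (nsmul_mem (mul_mem h4 h3) 4))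
    (nsmul_mem (mul_mem h1 hs) 4)) (nsmul_mem (mul_mem h1 h1) 4)

lemma decomp {u : Module.End ℂ L} (hu : u ∈ Agl 2) :
    ∃ a ∈ Ualg 2, ∃ b ∈ Ualg 2, u = a + Vop 2 * b := by
  induction hu using Algebra.adjoin_induction with
  | mem v hv =>
    rcases hv with hv | ⟨k, hk1, hk2, hk3⟩
    · exact ⟨v, Algebra.subset_adjoin hv, 0, zero_mem _, by rw [mul_zero, add_zero]⟩
    · have : k = 2 := by omega
      subst this; subst hk3
      exact ⟨0, zero_mem _, 1, one_mem _, by rw [mul_one, zero_add]⟩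
  | algebraMap r =>
    exact ⟨algebraMap ℂ _ r, algebraMap_mem _ r, 0, zero_mem _, by rw [mul_zero, add_zero]⟩
  | add v w _ _ hv hw =>
    obtain ⟨a, ha, b, hb, rfl⟩ := hv
    obtain ⟨c, hc, d, hd, rfl⟩ := hw
    exact ⟨a + c, add_mem ha hc, b + d, add_mem hb hd, by rw [mul_add]; abel⟩
  | mul v w _ _ hv hw =>
    obtain ⟨a, ha, b, hb, rfl⟩ := hv
    obtain ⟨c, hc, d, hd, rfl⟩ := hw
    refine ⟨a * c + (Vop 2 * Vop 2) * (b * d),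
      add_mem (mul_mem ha hc) (mul_mem Vsq_mem (mul_mem hb hd)),
      a * d + b * c, add_mem (mul_mem ha hd) (mul_mem hb hc), ?_⟩
    have h1 : a * (Vop 2 * d) = Vop 2 * (a * d) := by
      rw [← mul_assoc, ← Vcomm ha, mul_assoc]
    have h3 : (Vop 2 * b) * (Vop 2 * d) = Vop 2 * Vop 2 * (b * d) := by
      rw [mul_assoc, ← mul_assoc b, ← Vcomm hb, mul_assoc, ← mul_assoc, ← mul_assoc]
    rw [add_mul, mul_add, mul_add, h1, mul_assoc (Vop 2) b c, h3, mul_add (Vop 2)]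
    abel

lemma U_sub_Agl : (Ualg 2 : Set (Module.End ℂ L)) ⊆ (Agl 2 : Set (Module.End ℂ L)) :=
  Algebra.adjoin_mono Set.subset_union_left


/-- the fixed subalgebra of `𝒜(gl_2)` under conjugation by `τ` equals `U_2`. -/
theorem Agl2_fixed_points_eq_U2 :
    {u : Module.End ℂ L | u ∈ Agl 2 ∧ lin τ2 * u * lin τ2.symm = u} =
      (Ualg 2 : Set (Module.End ℂ L)) := by
  ext u
  constructor
  · rintro ⟨hA, hfix⟩
    obtain ⟨a, ha, b, hb, rfl⟩ := decomp hA
    have hconj : conjA (a + Vop 2 * b) = a + Vop 2 * b := hfix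
    rw [map_add, map_mul, conj_fix_U ha, conj_fix_U hb, conj_Vop2] at hconj
    have h0 : -(Vop 2 * b) = Vop 2 * b := by
      have h0' := add_left_cancel hconj
      rwa [neg_mul] at h0'
    have h2 : (2 : ℂ) • (Vop 2 * b) = 0 := by
      rw [two_smul]
      nth_rewrite 1 [← h0]
      exact neg_add_cancel _
    have hz : Vop 2 * b = 0 := (smul_eq_zero.mp h2).resolve_left two_ne_zero
    rw [hz, add_zero]
    exact ha
  · intro hu
    exact ⟨U_sub_Agl hu, conj_fix_U hu⟩
end
end

section
/- For n = 3, the operators A_{21}^± and A_{22}^∓ with opposite superscripts commute: [A_{21}⁺, A_{22}⁻] = 0 and [A_{21}⁻, A_{22}⁺] = 0 in End_ℂ(L). -/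
open scoped BigOperators
open MvPolynomial

set_option maxHeartbeats 1000000
set_option synthInstance.maxHeartbeats 400000

noncomputable section

section AuxProof

set_option maxHeartbeats 1000000
set_option synthInstance.maxHeartbeats 400000

lemma shiftEquiv_X (v w : ℕ × ℕ) :
    shiftEquiv v (X w) = if w = v then X w - 1 else X w := by
  simp [shiftEquiv]

lemma shiftEquiv_symm_X (v w : ℕ × ℕ) :
    (shiftEquiv v).symm (X w) = if w = v then X w + 1 else X w := by
  rw [shiftEquiv, AlgEquiv.ofAlgHom_symm]
  simp

lemma δ_algebraMap (k i : ℕ) (p : Lam) :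
    δ k i (algebraMap Lam L p) = algebraMap Lam L (shiftEquiv (k, i) p) := by
  simp [δ]

lemma δ_symm_algebraMap (k i : ℕ) (p : Lam) :
    (δ k i).symm (algebraMap Lam L p) = algebraMap Lam L ((shiftEquiv (k, i)).symm p) := by
  rw [AlgEquiv.symm_apply_eq, δ_algebraMap]
  simp

lemma δ_x (k i l j : ℕ) :
    δ k i (x l j) = x l j - if (l, j) = (k, i) then 1 else 0 := by
  rw [x, δ_algebraMap, shiftEquiv_X]
  split
  · rw [map_sub, map_one]
  · simp [x]

lemma δ_symm_x (k i l j : ℕ) :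
    (δ k i).symm (x l j) = x l j + if (l, j) = (k, i) then 1 else 0 := by
  rw [x, δ_symm_algebraMap, shiftEquiv_symm_X]
  split
  · rw [map_add, map_one]
  · simp [x]

lemma shift_comm (v w : ℕ × ℕ) (p : Lam) :
    shiftEquiv v ((shiftEquiv w).symm p) = (shiftEquiv w).symm (shiftEquiv v p) := by
  have h : ((shiftEquiv v).toAlgHom.comp (shiftEquiv w).symm.toAlgHom)
      = ((shiftEquiv w).symm.toAlgHom.comp (shiftEquiv v).toAlgHom) := by
    apply MvPolynomial.algHom_ext
    intro u
    simp only [AlgHom.coe_comp, Function.comp_apply, AlgEquiv.toAlgHom_eq_coe, AlgHom.coe_coe]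
    simp only [AlgEquiv.coe_algHom]
    rw [shiftEquiv_X, shiftEquiv_symm_X]
    by_cases h1 : u = v <;> by_cases h2 : u = w <;>
      simp [h1, h2, shiftEquiv_X, shiftEquiv_symm_X, map_sub, map_add] <;>
      split_ifs with h3 <;>
      simp_all [map_sub, map_add, shiftEquiv_X, shiftEquiv_symm_X]
  exact congrFun (congrArg DFunLike.coe h) p

lemma δ_comm (k i l j : ℕ) (f : L) :
    δ k i ((δ l j).symm f) = (δ l j).symm (δ k i f) := by
  obtain ⟨p, q, -, rfl⟩ := IsFractionRing.div_surjective (A := Lam) f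
  simp only [map_div₀, δ_algebraMap, δ_symm_algebraMap, shift_comm]

lemma ne_helper (p : Lam) (h : aeval (fun v : ℕ × ℕ => (v.2 : ℂ) * 10) p ≠ 0) :
    algebraMap Lam L p ≠ 0 := by
  intro h0
  exact h (by simp [(map_eq_zero_iff _ (IsFractionRing.injective Lam L)).mp h0])

lemma ne_d1 : x 2 2 - x 2 1 + 1 ≠ 0 := by
  have e : x 2 2 - x 2 1 + 1 = algebraMap Lam L (X (2,2) - X (2,1) + 1) := by
    simp [x, map_sub, map_add, map_one]
  rw [e]; apply ne_helper; simp; norm_num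

lemma ne_d2 : x 2 1 - x 2 2 - 2 ≠ 0 := by
  have e : x 2 1 - x 2 2 - 2 = algebraMap Lam L (X (2,1) - X (2,2) - 2) := by
    simp [x, map_sub, map_ofNat]
  rw [e]; apply ne_helper; simp; norm_num

lemma ne_d3 : x 2 1 - x 2 2 - 1 ≠ 0 := by
  have e : x 2 1 - x 2 2 - 1 = algebraMap Lam L (X (2,1) - X (2,2) - 1) := by
    simp [x, map_sub, map_one]
  rw [e]; apply ne_helper; simp; norm_num

lemma ne_d4 : x 2 2 - x 2 1 + 2 ≠ 0 := by
  have e : x 2 2 - x 2 1 + 2 = algebraMap Lam L (X (2,2) - X (2,1) + 2) := by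
    simp [x, map_sub, map_add, map_ofNat]
  rw [e]; apply ne_helper; simp; norm_num

lemma ne_e1 : x 2 2 - x 2 1 - 1 ≠ 0 := by
  have e : x 2 2 - x 2 1 - 1 = algebraMap Lam L (X (2,2) - X (2,1) - 1) := by
    simp [x, map_sub, map_one]
  rw [e]; apply ne_helper; simp; norm_num

lemma ne_e2 : x 2 1 - x 2 2 + 2 ≠ 0 := by
  have e : x 2 1 - x 2 2 + 2 = algebraMap Lam L (X (2,1) - X (2,2) + 2) := by
    simp [x, map_sub, map_add, map_ofNat]
  rw [e]; apply ne_helper; simp; norm_num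

lemma ne_e3 : x 2 1 - x 2 2 + 1 ≠ 0 := by
  have e : x 2 1 - x 2 2 + 1 = algebraMap Lam L (X (2,1) - X (2,2) + 1) := by
    simp [x, map_sub, map_add, map_one]
  rw [e]; apply ne_helper; simp; norm_num

lemma ne_e4 : x 2 2 - x 2 1 - 2 ≠ 0 := by
  have e : x 2 2 - x 2 1 - 2 = algebraMap Lam L (X (2,2) - X (2,1) - 2) := by
    simp [x, map_sub, map_ofNat]
  rw [e]; apply ne_helper; simp; norm_num

lemma aP21_eq : aP 2 1 =
    -((x 3 1 - x 2 1) * ((x 3 2 - x 2 1) * (x 3 3 - x 2 1)) / (x 2 2 - x 2 1)) := by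
  rw [aP, show (Finset.Icc 1 (2+1) : Finset ℕ) = {1,2,3} by decide,
    show ((Finset.Icc 1 2).erase 1 : Finset ℕ) = {2} by decide,
    Finset.prod_insert (by decide), Finset.prod_insert (by decide),
    Finset.prod_singleton, Finset.prod_singleton]

lemma aM22_eq : aM 2 2 = (x 1 1 - x 2 2) / (x 2 1 - x 2 2) := by
  rw [aM, show (Finset.Icc 1 (2-1) : Finset ℕ) = {1} by decide,
    show ((Finset.Icc 1 2).erase 2 : Finset ℕ) = {1} by decide,
    Finset.prod_singleton, Finset.prod_singleton]

lemma aP22_eq : aP 2 2 =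
    -((x 3 1 - x 2 2) * ((x 3 2 - x 2 2) * (x 3 3 - x 2 2)) / (x 2 1 - x 2 2)) := by
  rw [aP, show (Finset.Icc 1 (2+1) : Finset ℕ) = {1,2,3} by decide,
    show ((Finset.Icc 1 2).erase 2 : Finset ℕ) = {1} by decide,
    Finset.prod_insert (by decide), Finset.prod_insert (by decide),
    Finset.prod_singleton, Finset.prod_singleton]

lemma aM21_eq : aM 2 1 = (x 1 1 - x 2 1) / (x 2 2 - x 2 1) := by
  rw [aM, show (Finset.Icc 1 (2-1) : Finset ℕ) = {1} by decide,
    show ((Finset.Icc 1 2).erase 1 : Finset ℕ) = {2} by decide,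
    Finset.prod_singleton, Finset.prod_singleton]

lemma abstract1 {K : Type*} [Field K] (a b c u v w : K)
    (hA : v - (u - 1) ≠ 0) (hB : u - 1 - (v + 1) ≠ 0)
    (hC : u - (v + 1) ≠ 0) (hD : v + 1 - (u - 1) ≠ 0) :
    -((a - (u - 1)) * ((b - (u - 1)) * (c - (u - 1))) / (v - (u - 1))) *
        ((w - (v + 1)) / (u - 1 - (v + 1))) =
      (w - (v + 1)) / (u - (v + 1)) *
        -((a - (u - 1)) * ((b - (u - 1)) * (c - (u - 1))) / (v + 1 - (u - 1))) := by
  field_simp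
  ring

lemma abstract2 {K : Type*} [Field K] (a b c u v w : K)
    (hA : v - (u + 1) ≠ 0) (hB : u + 1 - (v - 1) ≠ 0)
    (hC : u - (v - 1) ≠ 0) (hD : v - 1 - (u + 1) ≠ 0) :
    (w - (u + 1)) / (v - (u + 1)) *
        -((a - (v - 1)) * ((b - (v - 1)) * (c - (v - 1))) / (u + 1 - (v - 1))) =
      -((a - (v - 1)) * ((b - (v - 1)) * (c - (v - 1))) / (u - (v - 1))) *
        ((w - (u + 1)) / (v - 1 - (u + 1))) := by
  field_simp
  ring

lemma key1 : δ 2 1 (aP 2 1) * δ 2 1 ((δ 2 2).symm (aM 2 2))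
    = (δ 2 2).symm (aM 2 2) * (δ 2 2).symm (δ 2 1 (aP 2 1)) := by
  simp only [aP21_eq, aM22_eq, map_neg, map_div₀, map_mul, map_sub, map_add, map_one,
    δ_x, δ_symm_x, Prod.mk.injEq]
  norm_num
  have hA : x 2 2 - (x 2 1 - 1) ≠ 0 := fun h => ne_d1 (by linear_combination h)
  have hB : x 2 1 - 1 - (x 2 2 + 1) ≠ 0 := fun h => ne_d2 (by linear_combination h)
  have hC : x 2 1 - (x 2 2 + 1) ≠ 0 := fun h => ne_d3 (by linear_combination h)
  have hD : x 2 2 + 1 - (x 2 1 - 1) ≠ 0 := fun h => ne_d4 (by linear_combination h)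
  have := abstract1 (x 3 1) (x 3 2) (x 3 3) (x 2 1) (x 2 2) (x 1 1) hA hB hC hD
  rw [neg_mul, mul_neg, neg_inj] at this
  exact this

lemma key2 : (δ 2 1).symm (aM 2 1) * (δ 2 1).symm (δ 2 2 (aP 2 2))
    = δ 2 2 (aP 2 2) * δ 2 2 ((δ 2 1).symm (aM 2 1)) := by
  simp only [aP22_eq, aM21_eq, map_neg, map_div₀, map_mul, map_sub, map_add, map_one,
    δ_x, δ_symm_x, Prod.mk.injEq]
  norm_num
  have hA : x 2 2 - (x 2 1 + 1) ≠ 0 := fun h => ne_e1 (by linear_combination h)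
  have hB : x 2 1 + 1 - (x 2 2 - 1) ≠ 0 := fun h => ne_e2 (by linear_combination h)
  have hC : x 2 1 - (x 2 2 - 1) ≠ 0 := fun h => ne_e3 (by linear_combination h)
  have hD : x 2 2 - 1 - (x 2 1 + 1) ≠ 0 := fun h => ne_e4 (by linear_combination h)
  have := abstract2 (x 3 1) (x 3 2) (x 3 3) (x 2 1) (x 2 2) (x 1 1) hA hB hC hD
  rw [mul_neg, neg_mul, neg_inj] at this
  exact this

end AuxProof

/-- `[A_{21}⁺, A_{22}⁻] = 0` and `[A_{21}⁻, A_{22}⁺] = 0`. -/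
theorem A21_A22_opposite_signs_commute :
    Ap 2 1 * Am 2 2 - Am 2 2 * Ap 2 1 = 0 ∧
    Am 2 1 * Ap 2 2 - Ap 2 2 * Am 2 1 = 0 := by
  constructor
  · have h : Ap 2 1 * Am 2 2 = Am 2 2 * Ap 2 1 := by
      apply LinearMap.ext
      intro f
      simp only [Ap, Am, lin, mulOp, Module.End.mul_apply, LinearMap.mulLeft_apply,
        AlgEquiv.toLinearMap_apply, map_mul]
      rw [← mul_assoc, key1, mul_assoc, δ_comm 2 1 2 2 f]
    exact sub_eq_zero_of_eq h
  · have h : Am 2 1 * Ap 2 2 = Ap 2 2 * Am 2 1 := by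
      apply LinearMap.ext
      intro f
      simp only [Ap, Am, lin, mulOp, Module.End.mul_apply, LinearMap.mulLeft_apply,
        AlgEquiv.toLinearMap_apply, map_mul]
      rw [← mul_assoc, key2, mul_assoc, δ_comm 2 2 2 1 f]
    exact sub_eq_zero_of_eq h
end
end

section
/- For every integer k ≥ 2, the multiplication operator m_{1/(x−k)} belongs to U_f. -/
noncomputable section

/-- The polynomial ring `ℂ[x]`. -/
abbrev Pc : Type := Polynomial ℂ

/-- `L = ℂ(x)`, the field of rational functions in one variable. -/
abbrev L1 : Type := FractionRing Pc

/-- The variable `x` as an element of `L`. -/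
def x1 : L1 := algebraMap Pc L1 Polynomial.X

/-- The algebra automorphism of `ℂ[x]` with `x ↦ x − 1`. -/
def shift1 : Pc ≃ₐ[ℂ] Pc :=
  AlgEquiv.ofAlgHom
    (Polynomial.aeval (Polynomial.X - 1))
    (Polynomial.aeval (Polynomial.X + 1))
    (by apply Polynomial.algHom_ext; simp)
    (by apply Polynomial.algHom_ext; simp)

/-- The ℂ-algebra automorphism `δ` of `L = ℂ(x)` with `δ(x) = x − 1`. -/
def δ1 : L1 ≃ₐ[ℂ] L1 := IsFractionRing.algEquivOfAlgEquiv shift1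

/-- Multiplication by `a ∈ L` as a ℂ-linear endomorphism `m_a` of `L`. -/
def mul1 (a : L1) : Module.End ℂ L1 := LinearMap.mulLeft ℂ a

/-- The operator `X = δ ∘ m_{f(x)/x}`. -/
def Xop (f : Pc) : Module.End ℂ L1 :=
  δ1.toLinearMap * mul1 (algebraMap Pc L1 f / x1)

/-- The operator `Y = δ^{-1}`. -/
def Yop : Module.End ℂ L1 := δ1.symm.toLinearMap

/-- `U_f`, the unital ℂ-subalgebra of `End_ℂ(L)` generated by the polynomial
multiplication operators together with `X` and `Y`. -/
def Uf (f : Pc) : Subalgebra ℂ (Module.End ℂ L1) :=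
  Algebra.adjoin ℂ
    ({u | ∃ p : Pc, u = mul1 (algebraMap Pc L1 p)} ∪ {Xop f, Yop})

open Polynomial

section Helpers

lemma mul1_mul (a b : L1) : mul1 (a * b) = mul1 a * mul1 b := by
  ext v
  simp [mul1, Module.End.mul_apply, mul_assoc]

lemma mul1_add (a b : L1) : mul1 (a + b) = mul1 a + mul1 b := by
  ext v
  simp [mul1, add_mul]

lemma mul1_one : mul1 (1 : L1) = 1 := by
  ext v
  simp [mul1]

lemma mul1_pow (a : L1) (n : ℕ) : mul1 (a ^ n) = (mul1 a) ^ n := by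
  induction n with
  | zero => simpa using mul1_one
  | succ n ih => rw [pow_succ, pow_succ, mul1_mul, ih]

lemma mulP_mem (f p : Pc) : mul1 (algebraMap Pc L1 p) ∈ Uf f :=
  Algebra.subset_adjoin (Or.inl ⟨p, rfl⟩)

lemma X_mem (f : Pc) : Xop f ∈ Uf f :=
  Algebra.subset_adjoin (Or.inr (Set.mem_insert _ _))

lemma Y_mem (f : Pc) : Yop ∈ Uf f :=
  Algebra.subset_adjoin (Or.inr (Set.mem_insert_of_mem _ rfl))

lemma conj_eq (f : Pc) (a : L1) :
    Xop f * mul1 a * Yop = mul1 (δ1 (algebraMap Pc L1 f / x1 * a)) := by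
  ext v
  simp [Xop, Yop, mul1, Module.End.mul_apply, map_mul, mul_assoc]

lemma conj_mem (f : Pc) (a : L1) (h : mul1 a ∈ Uf f) :
    mul1 (δ1 (algebraMap Pc L1 f / x1 * a)) ∈ Uf f := by
  rw [← conj_eq]
  exact mul_mem (mul_mem (X_mem f) h) (Y_mem f)

lemma δ1_algebraMap (p : Pc) :
    δ1 (algebraMap Pc L1 p) = algebraMap Pc L1 (shift1 p) := by
  simp [δ1, IsFractionRing.algEquivOfAlgEquiv_algebraMap]

lemma shift1_apply (p : Pc) : shift1 p = Polynomial.aeval (Polynomial.X - 1) p := rfl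

lemma eval_shift1 (p : Pc) (c : ℂ) : (shift1 p).eval c = p.eval (c - 1) := by
  rw [shift1_apply]
  have := Polynomial.aeval_algHom_apply (Polynomial.aeval c : Pc →ₐ[ℂ] ℂ)
    (Polynomial.X - 1 : Pc) p
  simp only [map_sub, Polynomial.aeval_X, map_one] at this
  simpa [Polynomial.coe_aeval_eq_eval] using this.symm

lemma shift1_X_sub_C (c : ℂ) : shift1 (X - C c) = X - C (c + 1) := by
  rw [shift1_apply]
  simp only [map_sub, Polynomial.aeval_X, Polynomial.aeval_C]
  rw [Polynomial.algebraMap_eq]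
  ring_nf
  rw [map_add, Polynomial.C_1]
  ring

lemma algebraMap_X_sub_C_ne (c : ℂ) : algebraMap Pc L1 (X - C c) ≠ 0 :=
  (map_ne_zero_iff _ (IsFractionRing.injective Pc L1)).mpr (X_sub_C_ne_zero c)

/-- Bezout extraction: if `m_{u/(x-c)^{μ+1}} ∈ U_f` where `μ` is the multiplicity
of `c` as a root of `u`, then `m_{1/(x-c)} ∈ U_f`. -/
lemma extract (f : Pc) (c : ℂ) (u : Pc) (hu : u ≠ 0)
    (h : mul1 (algebraMap Pc L1 u /
        algebraMap Pc L1 ((X - C c) ^ (u.rootMultiplicity c + 1))) ∈ Uf f) :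
    mul1 ((algebraMap Pc L1 (X - C c))⁻¹) ∈ Uf f := by
  obtain ⟨g, hg, hnd⟩ := u.exists_eq_pow_rootMultiplicity_mul_and_not_dvd hu c
  set μ : ℕ := u.rootMultiplicity c with hμ
  have hcop : IsCoprime (X - C c) g :=
    (Polynomial.irreducible_X_sub_C c).coprime_iff_not_dvd.mpr hnd
  obtain ⟨p, q, hpq⟩ := hcop
  set t : L1 := algebraMap Pc L1 (X - C c) with ht
  have htne : t ≠ 0 := algebraMap_X_sub_C_ne c
  have key : algebraMap Pc L1 u /
      algebraMap Pc L1 ((X - C c) ^ (μ + 1)) =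
      algebraMap Pc L1 g / t := by
    conv_lhs => rw [hg]
    rw [map_mul, map_pow, map_pow, ← ht, pow_succ]
    exact mul_div_mul_left _ _ (pow_ne_zero _ htne)
  rw [key] at h
  have h1 : algebraMap Pc L1 p * t + algebraMap Pc L1 q * algebraMap Pc L1 g = 1 := by
    rw [ht, ← map_mul, ← map_mul, ← map_add, hpq, map_one]
  have h2 : algebraMap Pc L1 p +
      algebraMap Pc L1 q * (algebraMap Pc L1 g / t) = t⁻¹ := by
    rw [mul_div_assoc', ← mul_div_cancel_right₀ (algebraMap Pc L1 p) htne,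
      ← add_div, h1, one_div]
  rw [← h2, mul1_add, mul1_mul]
  exact add_mem (mulP_mem f p) (mul_mem (mulP_mem f q) h)

lemma shift1_f_ne (f : Pc) (hf : f.eval 0 ≠ 0) : shift1 f ≠ 0 := by
  intro h0
  apply hf
  have : f = 0 := by
    have := shift1.injective (a₁ := f) (a₂ := 0) (by rw [h0, map_zero])
    exact this
  rw [this, Polynomial.eval_zero]

/-- Main induction: `m_{1/(x-j)} ∈ U_f` for every `j ≥ 1`. -/
lemma inv_mem (f : Pc) (hf : f.eval 0 ≠ 0) :
    ∀ j : ℕ, 1 ≤ j → mul1 ((algebraMap Pc L1 (X - C (j : ℂ)))⁻¹) ∈ Uf f := by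
  have hf1ne : shift1 f ≠ 0 := shift1_f_ne f hf
  intro j hj
  induction j, hj using Nat.le_induction with
  | base =>
    -- from X * Y = m_{f(x-1)/(x-1)}
    have h0 : mul1 (δ1 (algebraMap Pc L1 f / x1 * 1)) ∈ Uf f :=
      conj_mem f 1 (by rw [mul1_one]; exact one_mem _)
    rw [mul_one] at h0
    have hx1 : x1 = algebraMap Pc L1 (X : Pc) := rfl
    have hd : δ1 (algebraMap Pc L1 f / x1) =
        algebraMap Pc L1 (shift1 f) / algebraMap Pc L1 (X - C (1 : ℂ)) := by
      rw [hx1, map_div₀, δ1_algebraMap, δ1_algebraMap]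
      congr 2
      have := shift1_X_sub_C 0
      simpa using this
    rw [hd] at h0
    have hmult : (shift1 f).rootMultiplicity 1 = 0 := by
      apply Polynomial.rootMultiplicity_eq_zero
      intro hroot
      apply hf
      have := eval_shift1 f 1
      rw [Polynomial.IsRoot] at hroot
      rw [hroot] at this
      simpa using this.symm
    have : ((1:ℕ) : ℂ) = (1 : ℂ) := by norm_num
    rw [this]
    apply extract f 1 (shift1 f) hf1ne
    rw [hmult, zero_add, pow_one]
    exact h0
  | succ j hj ih =>
    set c : ℂ := ((j : ℂ) + 1) with hc
    set u : Pc := shift1 f with hu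
    set N : ℕ := u.rootMultiplicity c + 1 with hN
    -- step 1: m_{(1/(x-j))^N} ∈ U_f
    have h1 : mul1 (((algebraMap Pc L1 (X - C (j : ℂ)))⁻¹) ^ N) ∈ Uf f := by
      rw [mul1_pow]
      exact pow_mem ih N
    -- step 2: conjugate
    have h2 := conj_mem f _ h1
    -- compute the conjugated element
    have hx1 : x1 = algebraMap Pc L1 (X : Pc) := rfl
    have hst : shift1 (X - C (j : ℂ)) = X - C c := by
      rw [shift1_X_sub_C, hc]
    have hd : δ1 (algebraMap Pc L1 f / x1 *
        ((algebraMap Pc L1 (X - C (j : ℂ)))⁻¹) ^ N) =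
        algebraMap Pc L1 u / algebraMap Pc L1 (X - C (1 : ℂ)) *
          ((algebraMap Pc L1 (X - C c))⁻¹) ^ N := by
      rw [map_mul, map_div₀, map_pow, map_inv₀, hx1, δ1_algebraMap, δ1_algebraMap,
        δ1_algebraMap, hst, ← hu]
      congr 3
      have := shift1_X_sub_C 0
      simpa using this
    rw [hd] at h2
    -- step 3: clear the (x-1) factor
    have h3 : mul1 (algebraMap Pc L1 (X - C (1 : ℂ))) *
        mul1 (algebraMap Pc L1 u / algebraMap Pc L1 (X - C (1 : ℂ)) *
          ((algebraMap Pc L1 (X - C c))⁻¹) ^ N) ∈ Uf f :=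
      mul_mem (mulP_mem f _) h2
    rw [← mul1_mul] at h3
    have hident : algebraMap Pc L1 (X - C (1 : ℂ)) *
        (algebraMap Pc L1 u / algebraMap Pc L1 (X - C (1 : ℂ)) *
          ((algebraMap Pc L1 (X - C c))⁻¹) ^ N) =
        algebraMap Pc L1 u / algebraMap Pc L1 ((X - C c) ^ N) := by
      have h1ne : algebraMap Pc L1 (X - C (1 : ℂ)) ≠ 0 := algebraMap_X_sub_C_ne 1
      rw [← mul_assoc, mul_comm (algebraMap Pc L1 (X - C (1 : ℂ)))
        (algebraMap Pc L1 u / algebraMap Pc L1 (X - C (1 : ℂ))),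
        div_mul_cancel₀ _ h1ne, map_pow, inv_pow, div_eq_mul_inv]
    rw [hident] at h3
    -- step 4: extract
    have hcast : ((j + 1 : ℕ) : ℂ) = c := by push_cast [hc]; ring
    rw [hcast]
    exact extract f c u hf1ne h3

end Helpers

/-- for every integer `k ≥ 2`, `m_{1/(x−k)} ∈ U_f`. -/
theorem inv_x_sub_k_mem_Uf (f : Pc) (hf : Polynomial.eval 0 f ≠ 0)
    (k : ℕ) (hk : 2 ≤ k) :
    mul1 (1 / (x1 - (k : L1))) ∈ Uf f := by
  have hk1 : 1 ≤ k := le_trans (by norm_num) hk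
  have h := inv_mem f hf k hk1
  have heq : x1 - (k : L1) = algebraMap Pc L1 (X - C (k : ℂ)) := by
    rw [map_sub]
    congr 1
    rw [Polynomial.C_eq_natCast, map_natCast]
  rw [heq, one_div]
  exact h
end
end
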